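/- Let E, C : (0,∞) → [0,∞) be functions, let a, b > 0 and let Ê, Ĉ ∈ (0,∞) be such that ε^{-a} E(ε) → Ê and ε^{b} C(ε) → Ĉ as ε → 0⁺. Then for all sufficiently large c > 0 the set {ε > 0 : C(ε) < c} is nonempty and ε(c) := inf{ε > 0 : C(ε) < c} is strictly positive, and the function Ē(c) := E(ε(c)) satisfies Ē(c) · c^{a/b} → Ĉ^{a/b} · Ê as c → ∞; that is, Ē(c) is asymptotically equivalent to c^{-a/b} Ĉ^{a/b} Ê. -/

import Mathlib

open Filter Topology Set

private lemma aux_delta {P : ℝ → Prop} (h : ∀ᶠ ε in 𝓝[>] (0:ℝ), P ε) :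
    ∃ δ > 0, ∀ ε : ℝ, 0 < ε → ε < δ → P ε := by
  rw [eventually_nhdsWithin_iff, Metric.eventually_nhds_iff] at h
  obtain ⟨δ, hδ, h⟩ := h
  exact ⟨δ, hδ, fun ε hε hεδ => h (by simp [Real.dist_eq, abs_of_pos hε, hεδ]) hε⟩

/-- For `u > Chat`, eventually `(u/c)^(1/b)` belongs to the sublevel set. -/
private lemma aux_upper (C : ℝ → ℝ) (b Chat : ℝ) (hb : 0 < b) (hChat : 0 < Chat)
    (hC : Tendsto (fun ε : ℝ => ε ^ b * C ε) (𝓝[>] 0) (𝓝 Chat))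
    (u : ℝ) (hu : Chat < u) :
    ∀ᶠ c : ℝ in atTop, ((u / c) ^ (1/b) : ℝ) ∈ {ε : ℝ | 0 < ε ∧ C ε < c} := by
  have hu0 : 0 < u := hChat.trans hu
  obtain ⟨δ, hδ, hδh⟩ := aux_delta (hC.eventually (Filter.Tendsto.eventually_lt_const hu tendsto_id))
  filter_upwards [eventually_gt_atTop (max 0 (u / δ ^ b))] with c hc
  have hc0 : 0 < c := lt_of_le_of_lt (le_max_left _ _) hc
  have huc : 0 < u / c := div_pos hu0 hc0
  set ε := (u / c) ^ (1/b : ℝ) with hε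
  have hεpos : 0 < ε := Real.rpow_pos_of_pos huc _
  have hεb : ε ^ b = u / c := by
    rw [hε, ← Real.rpow_mul huc.le, one_div_mul_cancel hb.ne', Real.rpow_one]
  have hεδ : ε < δ := by
    have h1 : u / c < δ ^ b := by
      rw [div_lt_iff₀ hc0]
      calc u = u / δ ^ b * δ ^ b := by
            field_simp
        _ < c * δ ^ b := by
            exact mul_lt_mul_of_pos_right (lt_of_le_of_lt (le_max_right _ _) hc)
              (Real.rpow_pos_of_pos hδ _)
        _ = δ ^ b * c := mul_comm _ _
    calc ε = (u / c) ^ (1/b : ℝ) := rfl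
      _ < (δ ^ b) ^ (1/b : ℝ) := Real.rpow_lt_rpow huc.le h1 (by positivity)
      _ = δ := by rw [← Real.rpow_mul hδ.le, mul_one_div, div_self hb.ne', Real.rpow_one]
  have := hδh ε hεpos hεδ
  refine ⟨hεpos, ?_⟩
  rw [hεb] at this
  calc C ε = u / c * C ε * (c / u) := by field_simp
    _ < u * (c / u) := mul_lt_mul_of_pos_right this (div_pos hc0 hu0)
    _ = c := by field_simp

/-- For `0 < l < Chat`, eventually every element of the sublevel set is `≥ (l/c)^(1/b)`. -/
private lemma aux_lower (C : ℝ → ℝ) (b Chat : ℝ) (hb : 0 < b) (hChat : 0 < Chat)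
    (hC : Tendsto (fun ε : ℝ => ε ^ b * C ε) (𝓝[>] 0) (𝓝 Chat))
    (l : ℝ) (hl0 : 0 < l) (hl : l < Chat) :
    ∀ᶠ c : ℝ in atTop, ∀ ε ∈ {ε : ℝ | 0 < ε ∧ C ε < c}, ((l / c) ^ (1/b) : ℝ) ≤ ε := by
  obtain ⟨δ, hδ, hδh⟩ := aux_delta (hC.eventually (Filter.Tendsto.eventually_const_lt hl tendsto_id))
  filter_upwards [eventually_gt_atTop (max 0 (l / δ ^ b))] with c hc ε hεS
  have hc0 : 0 < c := lt_of_le_of_lt (le_max_left _ _) hc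
  have hlc : 0 < l / c := div_pos hl0 hc0
  obtain ⟨hεpos, hεC⟩ := hεS
  have hδsmall : ((l / c) ^ (1/b) : ℝ) < δ := by
    have h1 : l / c < δ ^ b := by
      rw [div_lt_iff₀ hc0]
      calc l = l / δ ^ b * δ ^ b := by field_simp
        _ < c * δ ^ b := mul_lt_mul_of_pos_right (lt_of_le_of_lt (le_max_right _ _) hc)
            (Real.rpow_pos_of_pos hδ _)
        _ = δ ^ b * c := mul_comm _ _
    calc ((l / c) ^ (1/b) : ℝ) < (δ ^ b) ^ (1/b : ℝ) := Real.rpow_lt_rpow hlc.le h1 (by positivity)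
      _ = δ := by rw [← Real.rpow_mul hδ.le, mul_one_div, div_self hb.ne', Real.rpow_one]
  by_cases hεδ : ε < δ
  · have h2 : l < ε ^ b * c := lt_of_lt_of_le (hδh ε hεpos hεδ)
      (mul_le_mul_of_nonneg_left hεC.le (Real.rpow_pos_of_pos hεpos b).le) |>.trans_le le_rfl
    have h3 : l / c < ε ^ b := by
      rw [div_lt_iff₀ hc0]; exact h2
    calc ((l / c) ^ (1/b) : ℝ) ≤ (ε ^ b) ^ (1/b : ℝ) := Real.rpow_le_rpow hlc.le h3.le (by positivity)
      _ = ε := by rw [← Real.rpow_mul hεpos.le, mul_one_div, div_self hb.ne', Real.rpow_one]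
  · exact hδsmall.le.trans (not_lt.mp hεδ)

theorem stmt0 (E C : ℝ → ℝ) (a b Ehat Chat : ℝ)
    (hEnn : ∀ ε : ℝ, 0 < ε → 0 ≤ E ε) (hCnn : ∀ ε : ℝ, 0 < ε → 0 ≤ C ε)
    (ha : 0 < a) (hb : 0 < b) (hEhat : 0 < Ehat) (hChat : 0 < Chat)
    (hE : Tendsto (fun ε : ℝ => ε ^ (-a) * E ε) (𝓝[>] 0) (𝓝 Ehat))
    (hC : Tendsto (fun ε : ℝ => ε ^ b * C ε) (𝓝[>] 0) (𝓝 Chat)) :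
    (∀ᶠ c : ℝ in atTop, {ε : ℝ | 0 < ε ∧ C ε < c}.Nonempty ∧
        0 < sInf {ε : ℝ | 0 < ε ∧ C ε < c}) ∧
      Tendsto (fun c : ℝ => E (sInf {ε : ℝ | 0 < ε ∧ C ε < c}) * c ^ (a / b))
        atTop (𝓝 (Chat ^ (a / b) * Ehat)) := by
  set S : ℝ → Set ℝ := fun c => {ε : ℝ | 0 < ε ∧ C ε < c} with hS
  set g : ℝ → ℝ := fun c => sInf (S c) with hg
  have hbdd : ∀ c : ℝ, BddBelow (S c) := fun c => ⟨0, fun ε hε => hε.1.le⟩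
  -- eventual nonemptiness
  have hne : ∀ᶠ c : ℝ in atTop, (S c).Nonempty :=
    (aux_upper C b Chat hb hChat hC (Chat + 1) (by linarith)).mono fun c hc => ⟨_, hc⟩
  -- eventual positive lower bound
  have hlow : ∀ᶠ c : ℝ in atTop,
      0 < c ∧ (S c).Nonempty ∧ ((Chat/2 / c) ^ (1/b) : ℝ) ≤ g c := by
    filter_upwards [eventually_gt_atTop 0, hne,
      aux_lower C b Chat hb hChat hC (Chat/2) (by linarith) (by linarith)] with c h0 h1 h2
    exact ⟨h0, h1, le_csInf h1 h2⟩
  have hpos : ∀ᶠ c : ℝ in atTop, 0 < g c := by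
    filter_upwards [hlow] with c ⟨h0, h1, h2⟩
    exact lt_of_lt_of_le (Real.rpow_pos_of_pos (div_pos (by linarith) h0) _) h2
  -- c * (g c)^b → Chat
  have hkey : Tendsto (fun c : ℝ => c * (g c) ^ b) atTop (𝓝 Chat) := by
    rw [tendsto_order]
    constructor
    · intro l hl
      set l' : ℝ := (max l 0 + Chat) / 2 with hl'
      have hl'0 : 0 < l' := by positivity
      have hl'C : l' < Chat := by
        have : max l 0 < Chat := max_lt hl hChat
        simp only [hl']; linarith
      have hll' : l < l' := lt_of_le_of_lt (le_max_left l 0) (by simp only [hl']; linarith [le_max_right l 0, max_lt hl hChat])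
      filter_upwards [eventually_gt_atTop 0, hne,
        aux_lower C b Chat hb hChat hC l' hl'0 hl'C] with c h0 h1 h2
      have hge : ((l' / c) ^ (1/b) : ℝ) ≤ g c := le_csInf h1 h2
      have hgc0 : 0 ≤ g c := le_csInf h1 fun ε hε => hε.1.le
      have : l' / c ≤ (g c) ^ b := by
        calc l' / c = (((l' / c) ^ (1/b) : ℝ)) ^ b := by
              rw [← Real.rpow_mul (div_pos hl'0 h0).le, one_div_mul_cancel hb.ne', Real.rpow_one]
          _ ≤ (g c) ^ b := Real.rpow_le_rpow (Real.rpow_pos_of_pos (div_pos hl'0 h0) _).le hge hb.le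
      have h4 : l' ≤ c * (g c) ^ b := by
        calc l' ≤ (g c) ^ b * c := (div_le_iff₀ h0).mp this
          _ = c * (g c) ^ b := mul_comm _ _
      linarith
    · intro u hu
      set u' : ℝ := (Chat + u) / 2 with hu'
      have hu'C : Chat < u' := by simp only [hu']; linarith
      have hu'u : u' < u := by simp only [hu']; linarith
      filter_upwards [eventually_gt_atTop 0, aux_upper C b Chat hb hChat hC u' hu'C,
        hne] with c h0 h2 h1
      have hle : g c ≤ ((u' / c) ^ (1/b) : ℝ) := csInf_le (hbdd c) h2
      have hgc0 : 0 ≤ g c := le_csInf h1 fun ε hε => hε.1.le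
      have : (g c) ^ b ≤ u' / c := by
        calc (g c) ^ b ≤ (((u' / c) ^ (1/b) : ℝ)) ^ b := Real.rpow_le_rpow hgc0 hle hb.le
          _ = u' / c := by
              rw [← Real.rpow_mul (div_pos (by linarith) h0).le, one_div_mul_cancel hb.ne',
                Real.rpow_one]
      have : c * (g c) ^ b ≤ u' := by
        rw [mul_comm, ← le_div_iff₀ h0]; exact this
      linarith
  -- g c → 0 within (0, ∞)
  have hgb0 : Tendsto (fun c : ℝ => (g c) ^ b) atTop (𝓝 0) := by
    have h1 : Tendsto (fun c : ℝ => (c * (g c) ^ b) * c⁻¹) atTop (𝓝 (Chat * 0)) :=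
      hkey.mul tendsto_inv_atTop_zero
    rw [mul_zero] at h1
    refine h1.congr' ?_
    filter_upwards [eventually_gt_atTop 0] with c h0
    field_simp
  have hg0 : Tendsto g atTop (𝓝[>] 0) := by
    rw [tendsto_nhdsWithin_iff]
    constructor
    · have hcont : ContinuousAt (fun x : ℝ => x ^ (1/b : ℝ)) 0 :=
        Real.continuousAt_rpow_const 0 (1/b) (Or.inr (by positivity))
      have := hcont.tendsto.comp hgb0
      rw [Real.zero_rpow (by positivity : (1/b : ℝ) ≠ 0)] at this
      refine this.congr' ?_
      filter_upwards [hpos] with c hc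
      simp only [Function.comp]
      rw [← Real.rpow_mul hc.le, mul_one_div, div_self hb.ne', Real.rpow_one]
    · exact hpos
  -- c^(1/b) * g c → Chat^(1/b)
  have hscale : Tendsto (fun c : ℝ => c ^ (1/b : ℝ) * g c) atTop (𝓝 (Chat ^ (1/b : ℝ))) := by
    have hcont : ContinuousAt (fun x : ℝ => x ^ (1/b : ℝ)) Chat :=
      Real.continuousAt_rpow_const Chat (1/b) (Or.inl hChat.ne')
    have h1 := hcont.tendsto.comp hkey
    refine h1.congr' ?_
    filter_upwards [eventually_gt_atTop 0, hpos] with c h0 hgc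
    simp only [Function.comp]
    rw [Real.mul_rpow h0.le (Real.rpow_pos_of_pos hgc b).le,
      ← Real.rpow_mul hgc.le, mul_one_div, div_self hb.ne', Real.rpow_one]
  -- conclusion
  refine ⟨hlow.mono fun c ⟨h0, h1, h2⟩ =>
    ⟨h1, lt_of_lt_of_le (Real.rpow_pos_of_pos (div_pos (by linarith) h0) _) h2⟩, ?_⟩
  have hEcomp : Tendsto (fun c : ℝ => (g c) ^ (-a) * E (g c)) atTop (𝓝 Ehat) := hE.comp hg0
  have hpow : Tendsto (fun c : ℝ => (c ^ (1/b : ℝ) * g c) ^ a) atTop (𝓝 (Chat ^ (a/b))) := by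
    have hcont : ContinuousAt (fun x : ℝ => x ^ a) (Chat ^ (1/b : ℝ)) :=
      Real.continuousAt_rpow_const _ a (Or.inl (Real.rpow_pos_of_pos hChat _).ne')
    have h1 := hcont.tendsto.comp hscale
    rw [show ((Chat ^ (1/b : ℝ)) ^ a = Chat ^ (a/b)) by
      rw [← Real.rpow_mul hChat.le, one_div_mul_eq_div]] at h1
    exact h1
  have hfinal := hEcomp.mul hpow
  rw [show Ehat * Chat ^ (a/b) = Chat ^ (a/b) * Ehat from mul_comm _ _] at hfinal
  refine hfinal.congr' ?_
  filter_upwards [eventually_gt_atTop 0, hpos] with c h0 hgc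
  show (g c) ^ (-a) * E (g c) * (c ^ (1/b : ℝ) * g c) ^ a = E (g c) * c ^ (a/b)
  rw [Real.mul_rpow (Real.rpow_pos_of_pos h0 _).le hgc.le,
    ← Real.rpow_mul h0.le, one_div_mul_eq_div]
  rw [Real.rpow_neg hgc.le]
  have hga : (0:ℝ) < (g c) ^ a := Real.rpow_pos_of_pos hgc a
  field_simp
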